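/- arXiv:2306.13427 — 2 statements merged into one kernel-verified Lean document; each statement's English description precedes it below -/
import Mathlib

section
/- Let M ∈ ℝ^{τ×τ} be symmetric positive definite, let V ∈ ℝ^{τ×q}, and let Δ ∈ ℝ^{q×q} be symmetric with ‖Δ‖ · ‖Vᵀ M⁻¹ V‖ < 1, where ‖·‖ denotes the spectral norm. Then the matrix M + V Δ Vᵀ is symmetric positive definite. -/
open Matrix
open scoped Matrix.Norms.L2Operator
open scoped MatrixOrder

/-- Let `M ∈ ℝ^{τ×τ}` be symmetric positive definite, `V ∈ ℝ^{τ×q}`, and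
`Δ ∈ ℝ^{q×q}` symmetric with `‖Δ‖ ⬝ ‖Vᵀ M⁻¹ V‖ < 1` (spectral norms). Then `M + V Δ Vᵀ` is
symmetric positive definite. -/
theorem posDef_add_small_structured_perturbation
    (τ q : ℕ)
    (M : Matrix (Fin τ) (Fin τ) ℝ) (V : Matrix (Fin τ) (Fin q) ℝ)
    (Δ : Matrix (Fin q) (Fin q) ℝ)
    (hM : M.PosDef) (hΔ : Δ.IsSymm)
    (hsmall : ‖Δ‖ * ‖Vᵀ * M⁻¹ * V‖ < 1) :
    (M + V * Δ * Vᵀ).PosDef := by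
  classical
  have hΔH : Δ.IsHermitian := hΔ
  set S := CFC.sqrt M with hSdef
  have hSS : S * S = M := CFC.sqrt_mul_sqrt_self M hM.posSemidef.nonneg
  have hSH : S.IsHermitian := (CFC.sqrt_nonneg M).posSemidef.isHermitian
  have hdetS : IsUnit S.det := by
    have h1 : S.det * S.det = M.det := by rw [← det_mul, hSS]
    have h2 := hM.det_pos
    refine isUnit_iff_ne_zero.mpr fun h => ?_
    rw [h, mul_zero] at h1; linarith [h1 ▸ h2]
  have hSinv : S⁻¹ * S = 1 := nonsing_inv_mul S hdetS
  have hMinv : M⁻¹ = S⁻¹ * S⁻¹ := by rw [← hSS, Matrix.mul_inv_rev]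
  have hSHinv : (S⁻¹).IsHermitian := hSH.inv
  -- B := S⁻¹ * V
  set B : Matrix (Fin τ) (Fin q) ℝ := S⁻¹ * V with hBdef
  have hBH : Bᴴ = Vᵀ * S⁻¹ := by
    rw [hBdef, conjTranspose_mul, hSHinv.eq]
    rfl
  have hBB : Bᴴ * B = Vᵀ * M⁻¹ * V := by
    rw [hBH, hBdef, hMinv]
    simp only [Matrix.mul_assoc]
  have hnormB : ‖B‖ * ‖B‖ = ‖Vᵀ * M⁻¹ * V‖ := by
    rw [← hBB, Matrix.l2_opNorm_conjTranspose_mul_self]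
  rw [posDef_iff_dotProduct_mulVec]
  constructor
  · exact hM.isHermitian.add (isHermitian_mul_mul_conjTranspose V hΔH)
  · intro x hx
    have hstar : star x = x := by simp
    rw [hstar]
    set y : Fin τ → ℝ := S *ᵥ x with hy
    set z : Fin q → ℝ := Vᵀ *ᵥ x with hz
    have hxy : x = S⁻¹ *ᵥ y := by
      rw [hy, mulVec_mulVec, hSinv, one_mulVec]
    have hzy : z = Bᴴ *ᵥ y := by
      rw [hBH, hz, hxy, mulVec_mulVec]
    -- quadratic form splits
    have hsplit : x ⬝ᵥ ((M + V * Δ * Vᵀ) *ᵥ x) = y ⬝ᵥ y + z ⬝ᵥ (Δ *ᵥ z) := by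
      rw [add_mulVec, dotProduct_add]
      congr 1
      · have hST : Sᵀ = S := hSH.eq
        rw [← hSS, ← mulVec_mulVec, ← hy, dotProduct_mulVec, ← mulVec_transpose, hST]
      · rw [← mulVec_mulVec, ← mulVec_mulVec, ← hz, dotProduct_mulVec, ← mulVec_transpose, ← hz]
    rw [hsplit]
    -- pass to Euclidean space
    set y' : EuclideanSpace ℝ (Fin τ) := (WithLp.equiv 2 _).symm y with hy'
    set z' : EuclideanSpace ℝ (Fin q) := (WithLp.equiv 2 _).symm z with hz'
    have hyy : y ⬝ᵥ y = ‖y'‖ ^ 2 := by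
      rw [← real_inner_self_eq_norm_sq, hy', EuclideanSpace.inner_toLp_toLp, star_trivial]
      rfl
    have hy'ne : y' ≠ 0 := by
      intro h
      apply hx
      have : y = 0 := by
        have := congrArg (WithLp.equiv 2 (Fin τ → ℝ)) h
        simpa [hy'] using this
      rw [hxy, this, mulVec_zero]
    have hy'pos : 0 < ‖y'‖ := norm_pos_iff.mpr hy'ne
    -- norm bound on z'
    have hznorm : ‖z'‖ ≤ ‖B‖ * ‖y'‖ := by
      have h1 := Matrix.l2_opNorm_mulVec Bᴴ y'
      have h2 : ‖Bᴴ‖ = ‖B‖ := Matrix.l2_opNorm_conjTranspose B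
      have h3 : ((EuclideanSpace.equiv (Fin q) ℝ).symm <| Bᴴ *ᵥ y') = z' := by
        rw [hz', hzy]; rfl
      rw [h3, h2] at h1
      exact h1
    -- Cauchy–Schwarz bound on the perturbation term
    have hCS : |z ⬝ᵥ (Δ *ᵥ z)| ≤ ‖Δ‖ * (‖z'‖ * ‖z'‖) := by
      have h1 : z ⬝ᵥ (Δ *ᵥ z) = inner ℝ z' ((WithLp.equiv 2 _).symm (Δ *ᵥ z) : EuclideanSpace ℝ (Fin q)) := by
        rw [EuclideanSpace.inner_toLp_toLp, star_trivial]; exact dotProduct_comm _ _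
      have h2 := abs_real_inner_le_norm z' ((WithLp.equiv 2 _).symm (Δ *ᵥ z) : EuclideanSpace ℝ (Fin q))
      have h3 : ‖((WithLp.equiv 2 _).symm (Δ *ᵥ z) : EuclideanSpace ℝ (Fin q))‖ ≤ ‖Δ‖ * ‖z'‖ := by
        have := Matrix.l2_opNorm_mulVec Δ z'
        exact this
      rw [h1]
      calc |inner ℝ z' ((WithLp.equiv 2 _).symm (Δ *ᵥ z) : EuclideanSpace ℝ (Fin q))|
          ≤ ‖z'‖ * ‖((WithLp.equiv 2 _).symm (Δ *ᵥ z) : EuclideanSpace ℝ (Fin q))‖ := h2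
        _ ≤ ‖z'‖ * (‖Δ‖ * ‖z'‖) :=
            mul_le_mul_of_nonneg_left h3 (norm_nonneg _)
        _ = ‖Δ‖ * (‖z'‖ * ‖z'‖) := by ring
    have hkey : ‖Δ‖ * (‖B‖ * ‖B‖) < 1 := by rw [hnormB]; exact hsmall
    have habs := abs_le.mp hCS
    have hz0 : (0:ℝ) ≤ ‖z'‖ := norm_nonneg _
    have hB0 : (0:ℝ) ≤ ‖B‖ := norm_nonneg _
    have hΔ0 : (0:ℝ) ≤ ‖Δ‖ := norm_nonneg _
    rw [hyy]
    nlinarith [habs.1, mul_self_nonneg (‖B‖ * ‖y'‖ - ‖z'‖), mul_le_mul hznorm hznorm hz0 (by positivity : (0:ℝ) ≤ ‖B‖ * ‖y'‖), mul_pos hy'pos hy'pos, mul_nonneg hΔ0 (mul_nonneg hz0 hz0)]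
end

section
/- Let E = [E_T E_C] ∈ ℝ^{n×m} satisfy Eᵀ𝟙_n = 0, where E_T ∈ ℝ^{n×(n−1)} has rank n−1 and every column of E_C lies in the column space of E_T; let W = diag(w₁,…,w_m) with all w_k > 0, set T = (E_TᵀE_T)⁻¹E_TᵀE_C and R = [I_{n−1} T]. Let S ⊆ {1,…,m} be a nonempty set of q attacked edges, let P ∈ ℝ^{m×q} be the selection matrix whose columns are the distinct standard basis vectors of ℝ^m indexed by S, and let Δ ∈ ℝ^{q×q} be diagonal with ‖Δ‖ < ‖Pᵀ Rᵀ (R W Rᵀ)⁻¹ R P‖⁻¹. Then the perturbed Laplacian L_Δ = E (W + P Δ Pᵀ) Eᵀ is symmetric positive semidefinite and its kernel is exactly the span of 𝟙_n. -/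
open Matrix
open scoped Matrix.Norms.L2Operator

set_option linter.unusedSectionVars false

section Helpers
variable {m k p : Type*} [Fintype m] [Fintype k] [Fintype p] [DecidableEq m] [DecidableEq k] [DecidableEq p]

lemma dot_self_pos {v : m → ℝ} (hv : v ≠ 0) : 0 < v ⬝ᵥ v := by
  have h1 : ∀ i ∈ Finset.univ, 0 ≤ v i * v i := fun i _ => mul_self_nonneg _
  obtain ⟨i, hi⟩ : ∃ i, v i ≠ 0 := Function.ne_iff.mp hv
  exact Finset.sum_pos' h1 ⟨i, Finset.mem_univ i, mul_pos_iff.mpr (by rcases hi.lt_or_gt with h|h; exact Or.inr ⟨h,h⟩; exact Or.inl ⟨h,h⟩)⟩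

lemma quad_factor (B : Matrix m p ℝ) (D : Matrix p p ℝ) (x : m → ℝ) :
    x ⬝ᵥ ((B * D * Bᵀ) *ᵥ x) = (Bᵀ *ᵥ x) ⬝ᵥ (D *ᵥ (Bᵀ *ᵥ x)) := by
  rw [← mulVec_mulVec, ← mulVec_mulVec, dotProduct_mulVec, ← mulVec_transpose]

lemma mul_col (A : Matrix m k ℝ) (B : Matrix k p ℝ) (i : m) (j : p) :
    (A * B) i j = (A *ᵥ (fun x => B x j)) i := by
  simp [mul_apply, mulVec, dotProduct]

lemma isHermitian_of_transpose {A : Matrix m m ℝ} (h : Aᵀ = A) : A.IsHermitian := by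
  rwa [Matrix.IsHermitian, conjTranspose_eq_transpose_of_trivial]

lemma diag_dot_pos {w : m → ℝ} (hw : ∀ i, 0 < w i) {y : m → ℝ} (hy : y ≠ 0) :
    0 < y ⬝ᵥ (Matrix.diagonal w *ᵥ y) := by
  have h : y ⬝ᵥ (Matrix.diagonal w *ᵥ y) = ∑ i, w i * (y i * y i) := by
    simp [dotProduct, mulVec_diagonal]
    exact Finset.sum_congr rfl fun i _ => by ring
  rw [h]
  obtain ⟨i, hi⟩ : ∃ i, y i ≠ 0 := Function.ne_iff.mp hy
  refine Finset.sum_pos' (fun i _ => mul_nonneg (hw i).le (mul_self_nonneg _)) ⟨i, Finset.mem_univ i, ?_⟩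
  exact mul_pos (hw i) (mul_pos_iff.mpr (by rcases hi.lt_or_gt with h|h; exact Or.inr ⟨h,h⟩; exact Or.inl ⟨h,h⟩))




lemma dot_self_eq_norm_sq (v : m → ℝ) :
    v ⬝ᵥ v = ‖(EuclideanSpace.equiv m ℝ).symm v‖ ^ 2 := by
  rw [← real_inner_self_eq_norm_sq]
  simp [dotProduct, PiLp.inner_apply, -real_inner_self_eq_norm_sq, -inner_self_eq_norm_sq_to_K]

lemma mulVec_dot_le (A : Matrix m k ℝ) (x : k → ℝ) :
    (A *ᵥ x) ⬝ᵥ (A *ᵥ x) ≤ ‖A‖ ^ 2 * (x ⬝ᵥ x) := by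
  have h := A.l2_opNorm_mulVec ((EuclideanSpace.equiv k ℝ).symm x)
  rw [dot_self_eq_norm_sq, dot_self_eq_norm_sq]
  calc ‖(EuclideanSpace.equiv m ℝ).symm (A *ᵥ x)‖ ^ 2
      ≤ (‖A‖ * ‖(EuclideanSpace.equiv k ℝ).symm x‖) ^ 2 := by
        apply pow_le_pow_left₀ (norm_nonneg _) _ 2
        exact h
    _ = ‖A‖ ^ 2 * ‖(EuclideanSpace.equiv k ℝ).symm x‖ ^ 2 := by ring

lemma abs_dot_mulVec_le (A : Matrix m m ℝ) (x : m → ℝ) :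
    |x ⬝ᵥ (A *ᵥ x)| ≤ ‖A‖ * (x ⬝ᵥ x) := by
  have h1 : |(inner ℝ ((EuclideanSpace.equiv m ℝ).symm x) ((EuclideanSpace.equiv m ℝ).symm (A *ᵥ x)) : ℝ)|
      ≤ ‖(EuclideanSpace.equiv m ℝ).symm x‖ * ‖(EuclideanSpace.equiv m ℝ).symm (A *ᵥ x)‖ :=
    abs_real_inner_le_norm _ _
  have h2 := A.l2_opNorm_mulVec ((EuclideanSpace.equiv m ℝ).symm x)
  have h3 : (inner ℝ ((EuclideanSpace.equiv m ℝ).symm x) ((EuclideanSpace.equiv m ℝ).symm (A *ᵥ x)) : ℝ)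
      = x ⬝ᵥ (A *ᵥ x) := by
    simp [dotProduct, PiLp.inner_apply, mul_comm]
  rw [← h3]
  calc |(inner ℝ ((EuclideanSpace.equiv m ℝ).symm x) ((EuclideanSpace.equiv m ℝ).symm (A *ᵥ x)) : ℝ)|
      ≤ ‖(EuclideanSpace.equiv m ℝ).symm x‖ * ‖(EuclideanSpace.equiv m ℝ).symm (A *ᵥ x)‖ := h1
    _ ≤ ‖(EuclideanSpace.equiv m ℝ).symm x‖ * (‖A‖ * ‖(EuclideanSpace.equiv m ℝ).symm x‖) := by
        apply mul_le_mul_of_nonneg_left h2 (norm_nonneg _)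
    _ = ‖A‖ * (‖(EuclideanSpace.equiv m ℝ).symm x‖^2) := by ring
    _ = ‖A‖ * (x ⬝ᵥ x) := by rw [dot_self_eq_norm_sq]

open scoped MatrixOrder in
lemma key_bound {p : Type*} [Fintype p] [DecidableEq p] {M : Matrix m m ℝ} (hM : M.PosDef)
    (B : Matrix m p ℝ) (x : m → ℝ) :
    (Bᵀ *ᵥ x) ⬝ᵥ (Bᵀ *ᵥ x) ≤ ‖Bᵀ * M⁻¹ * B‖ * (x ⬝ᵥ (M *ᵥ x)) := by
  have hMps := hM.posSemidef
  set S := CFC.sqrt M with hSdef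
  have hS : S.PosSemidef := (CFC.sqrt_nonneg M).posSemidef
  have hSS : S * S = M := CFC.sqrt_mul_sqrt_self M hMps.nonneg
  have hdetS : IsUnit S.det := by
    have h1 : S.det * S.det = M.det := by rw [← det_mul, hSS]
    have h2 : 0 < M.det := hM.det_pos
    refine isUnit_iff_ne_zero.2 fun h => ?_
    rw [h, mul_zero] at h1
    exact absurd h1.symm (ne_of_gt h2)
  have hSinv : S⁻¹ * S = 1 := nonsing_inv_mul S hdetS
  have hSsymm : Sᵀ = S := by
    have := hS.isHermitian
    rwa [← conjTranspose_eq_transpose_of_trivial]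
  have hA : Bᵀ *ᵥ x = (Bᵀ * S⁻¹) *ᵥ (S *ᵥ x) := by
    rw [mulVec_mulVec, Matrix.mul_assoc, hSinv, Matrix.mul_one]
  have hSx : (S *ᵥ x) ⬝ᵥ (S *ᵥ x) = x ⬝ᵥ (M *ᵥ x) := by
    rw [dotProduct_mulVec, ← mulVec_transpose, hSsymm, mulVec_mulVec, hSS, dotProduct_comm]
  have hnorm : ‖Bᵀ * S⁻¹‖ ^ 2 = ‖Bᵀ * M⁻¹ * B‖ := by
    have h1 : ‖(Bᵀ * S⁻¹) * (Bᵀ * S⁻¹)ᴴ‖ = ‖(Bᵀ * S⁻¹)ᴴ‖ * ‖(Bᵀ * S⁻¹)ᴴ‖ := by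
      conv_lhs => rw [← conjTranspose_conjTranspose (Bᵀ * S⁻¹)]
      exact l2_opNorm_conjTranspose_mul_self _
    have h2 : (Bᵀ * S⁻¹) * (Bᵀ * S⁻¹)ᴴ = Bᵀ * M⁻¹ * B := by
      rw [conjTranspose_eq_transpose_of_trivial, transpose_mul, transpose_nonsing_inv,
        hSsymm, transpose_transpose, ← hSS, Matrix.mul_inv_rev]
      simp [Matrix.mul_assoc]
    rw [h2.symm, h1, l2_opNorm_conjTranspose]
    ring
  calc (Bᵀ *ᵥ x) ⬝ᵥ (Bᵀ *ᵥ x)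
      = ((Bᵀ * S⁻¹) *ᵥ (S *ᵥ x)) ⬝ᵥ ((Bᵀ * S⁻¹) *ᵥ (S *ᵥ x)) := by rw [← hA]
    _ ≤ ‖Bᵀ * S⁻¹‖ ^ 2 * ((S *ᵥ x) ⬝ᵥ (S *ᵥ x)) := mulVec_dot_le _ _
    _ = ‖Bᵀ * M⁻¹ * B‖ * (x ⬝ᵥ (M *ᵥ x)) := by rw [hnorm, hSx]

end Helpers

set_option maxHeartbeats 1000000 in
/-- Robust stability of the perturbed Laplacian under multi-edge attacks:
if `E = [E_T E_C]` with `Eᵀ𝟙 = 0`, `E_T` of full column rank `n−1`, the columns of `E_C` in the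
column space of `E_T`, `W = diag(w)` with positive weights, `R = [I (E_TᵀE_T)⁻¹E_TᵀE_C]` the
cut-set matrix, `P` the selection matrix of a nonempty attacked-edge set, and `Δ = diag(d)` with
`‖Δ‖ < ‖Pᵀ Rᵀ (R W Rᵀ)⁻¹ R P‖⁻¹` (spectral norms), then
`L_Δ = E (W + P Δ Pᵀ) Eᵀ` is symmetric positive semidefinite with kernel exactly `span{𝟙}`. -/
theorem perturbed_laplacian_posSemidef_ker_span_ones
    (n c q : ℕ) (hn : 2 ≤ n) (hq : 0 < q)
    (ET : Matrix (Fin n) (Fin (n - 1)) ℝ) (EC : Matrix (Fin n) (Fin c) ℝ)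
    (E : Matrix (Fin n) (Fin (n - 1) ⊕ Fin c) ℝ)
    (hE : E = Matrix.fromCols ET EC)
    (hE1 : Eᵀ *ᵥ (fun _ => (1 : ℝ)) = 0)
    (hrankT : ET.rank = n - 1)
    (hcol : ∀ j : Fin c, ∃ x : Fin (n - 1) → ℝ, ET *ᵥ x = fun i => EC i j)
    (w : Fin (n - 1) ⊕ Fin c → ℝ) (hw : ∀ k, 0 < w k)
    (R : Matrix (Fin (n - 1)) (Fin (n - 1) ⊕ Fin c) ℝ)
    (hR : R = Matrix.fromCols (1 : Matrix (Fin (n - 1)) (Fin (n - 1)) ℝ)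
      ((ETᵀ * ET)⁻¹ * ETᵀ * EC))
    (s : Fin q → Fin (n - 1) ⊕ Fin c) (hs : Function.Injective s)
    (P : Matrix (Fin (n - 1) ⊕ Fin c) (Fin q) ℝ)
    (hP : P = Matrix.of fun i j => if i = s j then (1 : ℝ) else 0)
    (d : Fin q → ℝ)
    (hsmall : ‖Matrix.diagonal d‖ <
      ‖Pᵀ * Rᵀ * (R * Matrix.diagonal w * Rᵀ)⁻¹ * R * P‖⁻¹)
    (LΔ : Matrix (Fin n) (Fin n) ℝ)
    (hLΔ : LΔ = E * (Matrix.diagonal w + P * Matrix.diagonal d * Pᵀ) * Eᵀ) :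
    LΔ.PosSemidef ∧
      LinearMap.ker LΔ.mulVecLin =
        Submodule.span ℝ {(fun _ => (1 : ℝ) : Fin n → ℝ)} := by
  -- ET has trivial kernel
  have hker : LinearMap.ker ET.mulVecLin = ⊥ := by
    have h1 := LinearMap.finrank_range_add_finrank_ker ET.mulVecLin
    have h2 : Module.finrank ℝ (Fin (n-1) → ℝ) = n - 1 := by simp
    have h3 : Module.finrank ℝ (LinearMap.range ET.mulVecLin) = n - 1 := hrankT
    rw [h2, h3] at h1
    have h4 : Module.finrank ℝ (LinearMap.ker ET.mulVecLin) = 0 := by omega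
    exact Submodule.finrank_eq_zero.mp h4
  have hinj : ∀ v, ET *ᵥ v = 0 → v = 0 := by
    intro v hv
    have : v ∈ LinearMap.ker ET.mulVecLin := by
      simpa [LinearMap.mem_ker, mulVecLin_apply] using hv
    simpa [hker] using this
  -- ETᵀ * ET is positive definite
  have hPDT : (ETᵀ * ET).PosDef := by
    refine Matrix.PosDef.of_dotProduct_mulVec_pos (isHermitian_of_transpose (by rw [transpose_mul, transpose_transpose])) ?_
    intro v hv
    have h0 : ET *ᵥ v ≠ 0 := fun h => hv (hinj v h)
    have h1 : star v ⬝ᵥ ((ETᵀ * ET) *ᵥ v) = (ET *ᵥ v) ⬝ᵥ (ET *ᵥ v) := by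
      rw [star_trivial, ← mulVec_mulVec, dotProduct_mulVec, vecMul_transpose]
    rw [h1]; exact dot_self_pos h0
  have hdetT : IsUnit (ETᵀ * ET).det := isUnit_iff_ne_zero.2 hPDT.det_pos.ne'
  -- EC = ET * T
  have hEC : ET * ((ETᵀ * ET)⁻¹ * ETᵀ * EC) = EC := by
    ext i j
    obtain ⟨x, hx⟩ := hcol j
    have hcolT : (fun k => ((ETᵀ * ET)⁻¹ * ETᵀ * EC) k j) = x := by
      funext k
      have h1 : (fun k => (ETᵀ * EC) k j) = (ETᵀ * ET) *ᵥ x := by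
        funext i
        rw [mul_col, ← hx, mulVec_mulVec]
      calc ((ETᵀ * ET)⁻¹ * ETᵀ * EC) k j
          = ((ETᵀ * ET)⁻¹ *ᵥ (fun k => (ETᵀ * EC) k j)) k := by
            rw [Matrix.mul_assoc, mul_col]
        _ = x k := by rw [h1, mulVec_mulVec, Matrix.nonsing_inv_mul _ hdetT, one_mulVec]
    rw [mul_col, hcolT, hx]
  have hER : E = ET * R := by
    rw [hE, hR, Matrix.mul_fromCols, Matrix.mul_one, hEC]
  -- Rᵀ *ᵥ x determines x
  have hRt : ∀ (x : Fin (n-1) → ℝ) (i), (Rᵀ *ᵥ x) (Sum.inl i) = x i := by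
    intro x i
    rw [hR, transpose_fromCols, fromRows_mulVec]
    simp
  -- M = R W Rᵀ is positive definite
  set M : Matrix (Fin (n-1)) (Fin (n-1)) ℝ := R * Matrix.diagonal w * Rᵀ with hM
  have hMPD : M.PosDef := by
    refine Matrix.PosDef.of_dotProduct_mulVec_pos (isHermitian_of_transpose ?_) ?_
    · rw [hM, transpose_mul, transpose_mul, transpose_transpose, diagonal_transpose,
        Matrix.mul_assoc]
    · intro x hx
      have hy : Rᵀ *ᵥ x ≠ 0 := by
        intro h
        apply hx
        funext i
        have := congrFun h (Sum.inl i)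
        rwa [hRt] at this
      have h1 : star x ⬝ᵥ (M *ᵥ x) = (Rᵀ *ᵥ x) ⬝ᵥ (Matrix.diagonal w *ᵥ (Rᵀ *ᵥ x)) := by
        rw [star_trivial, hM, quad_factor]
      rw [h1]
      exact diag_dot_pos hw hy
  -- the key norm facts
  set K : ℝ := ‖Pᵀ * Rᵀ * M⁻¹ * R * P‖ with hK
  have hΔK : ‖Matrix.diagonal d‖ * K < 1 := by
    rcases eq_or_lt_of_le (norm_nonneg (Pᵀ * Rᵀ * M⁻¹ * R * P)) with h0 | h0
    · rw [← hK] at h0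
      exact absurd hsmall (by rw [← h0]; simp only [_root_.inv_zero, not_lt]; exact norm_nonneg _)
    · have := mul_lt_mul_of_pos_right hsmall h0
      rwa [inv_mul_cancel₀ h0.ne'] at this
  -- N = R (W + P Δ Pᵀ) Rᵀ is positive definite
  set N : Matrix (Fin (n-1)) (Fin (n-1)) ℝ :=
    R * (Matrix.diagonal w + P * Matrix.diagonal d * Pᵀ) * Rᵀ with hN
  have hMt : Mᵀ = M := by
    have := hMPD.isHermitian.eq
    rwa [conjTranspose_eq_transpose_of_trivial] at this
  have hNsplit : N = M + (R * P) * Matrix.diagonal d * (R * P)ᵀ := by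
    rw [hN, hM, transpose_mul, Matrix.mul_add, Matrix.add_mul]
    simp [Matrix.mul_assoc]
  have hNPD : N.PosDef := by
    refine Matrix.PosDef.of_dotProduct_mulVec_pos (isHermitian_of_transpose ?_) ?_
    · rw [hNsplit]
      simp [transpose_add, transpose_mul, hMt, Matrix.mul_assoc]
    · intro x hx
      have hq1 : 0 < x ⬝ᵥ (M *ᵥ x) := by
        have := hMPD.dotProduct_mulVec_pos hx
        rwa [star_trivial] at this
      have hKeq : K = ‖(R * P)ᵀ * M⁻¹ * (R * P)‖ := by
        rw [hK, transpose_mul, Matrix.mul_assoc (Pᵀ * Rᵀ * M⁻¹)]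
      have hy2 : ((R * P)ᵀ *ᵥ x) ⬝ᵥ ((R * P)ᵀ *ᵥ x) ≤ K * (x ⬝ᵥ (M *ᵥ x)) := by
        rw [hKeq]
        exact key_bound hMPD (R * P) x
      have habs := abs_dot_mulVec_le (Matrix.diagonal d) ((R * P)ᵀ *ᵥ x)
      have hquad : star x ⬝ᵥ (N *ᵥ x) = x ⬝ᵥ (M *ᵥ x)
          + ((R * P)ᵀ *ᵥ x) ⬝ᵥ (Matrix.diagonal d *ᵥ ((R * P)ᵀ *ᵥ x)) := by
        rw [star_trivial, hNsplit, add_mulVec, dotProduct_add]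
        congr 1
        exact quad_factor _ _ _
      rw [hquad]
      have hyy : (0:ℝ) ≤ ((R * P)ᵀ *ᵥ x) ⬝ᵥ ((R * P)ᵀ *ᵥ x) := by
        rcases eq_or_ne ((R * P)ᵀ *ᵥ x) 0 with h | h
        · rw [h]; simp
        · exact (dot_self_pos h).le
      nlinarith [neg_abs_le (((R * P)ᵀ *ᵥ x) ⬝ᵥ (Matrix.diagonal d *ᵥ ((R * P)ᵀ *ᵥ x))),
        norm_nonneg (Matrix.diagonal d)]
  -- LΔ = ET * N * ETᵀ
  have hL : LΔ = ET * N * ETᵀ := by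
    rw [hLΔ, hER, hN, transpose_mul]
    simp [Matrix.mul_assoc]
  have hPSD : LΔ.PosSemidef := by
    have h := hNPD.posSemidef.mul_mul_conjTranspose_same ET
    rwa [conjTranspose_eq_transpose_of_trivial, ← hL] at h
  refine ⟨hPSD, ?_⟩
  have hkerL : ∀ x : Fin n → ℝ, LΔ *ᵥ x = 0 ↔ ETᵀ *ᵥ x = 0 := by
    intro x
    constructor
    · intro hx0
      by_contra hne
      have h1 : x ⬝ᵥ (LΔ *ᵥ x) = (ETᵀ *ᵥ x) ⬝ᵥ (N *ᵥ (ETᵀ *ᵥ x)) := by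
        rw [hL]; exact quad_factor _ _ _
      have h2 := hNPD.dotProduct_mulVec_pos hne
      rw [star_trivial, ← h1, hx0, dotProduct_zero] at h2
      exact lt_irrefl _ h2
    · intro hx0
      rw [hL, ← mulVec_mulVec, ← mulVec_mulVec, hx0, mulVec_zero, mulVec_zero]
  have hkerEq : LinearMap.ker LΔ.mulVecLin = LinearMap.ker (ETᵀ).mulVecLin := by
    ext x
    simp only [LinearMap.mem_ker, mulVecLin_apply]
    exact hkerL x
  rw [hkerEq]
  have hone : ETᵀ *ᵥ (fun _ => (1:ℝ)) = 0 := by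
    funext i
    have h1 : Eᵀ *ᵥ (fun _ => (1:ℝ))
        = Sum.elim (ETᵀ *ᵥ fun _ => (1:ℝ)) (ECᵀ *ᵥ fun _ => (1:ℝ)) := by
      rw [hE, transpose_fromCols, fromRows_mulVec]
    have h2 := congrFun hE1 (Sum.inl i)
    rw [h1] at h2
    exact h2
  have hle : Submodule.span ℝ {(fun _ => (1 : ℝ) : Fin n → ℝ)}
      ≤ LinearMap.ker (ETᵀ).mulVecLin := by
    rw [Submodule.span_le, Set.singleton_subset_iff]
    simp only [SetLike.mem_coe, LinearMap.mem_ker, mulVecLin_apply]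
    exact hone
  have hones_ne : (fun _ => (1 : ℝ) : Fin n → ℝ) ≠ 0 := by
    intro h
    have := congrFun h ⟨0, by omega⟩
    simp at this
  have hfr1 : Module.finrank ℝ (Submodule.span ℝ {(fun _ => (1 : ℝ) : Fin n → ℝ)}) = 1 :=
    finrank_span_singleton hones_ne
  have hfr2 : Module.finrank ℝ (LinearMap.ker (ETᵀ).mulVecLin) ≤ 1 := by
    have h1 := LinearMap.finrank_range_add_finrank_ker (ETᵀ).mulVecLin
    have h2 : Module.finrank ℝ (Fin n → ℝ) = n := by simp
    have h3 : Module.finrank ℝ (LinearMap.range (ETᵀ).mulVecLin) = n - 1 := by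
      have h4 := ET.rank_transpose
      rw [hrankT] at h4
      exact h4
    rw [h2, h3] at h1
    omega
  exact (Submodule.eq_of_le_of_finrank_le hle (by rw [hfr1]; exact hfr2)).symm
end
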